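/- For a > 0, v ≥ 0, n ≥ 1 with f_a(x) = a/n + 2v(1 − cos x), one has ∫_0^π 1/f_a(x)² dx = (π / (2(a/n)·√((a/n)² + 4av/n)))·(1 + (a/n)/(a/n + 4v)). -/

import Mathlib

open Real

lemma key_cos_integral (A B : ℝ) (hB : 0 ≤ B) (hAB : B < A) :
    ∫ x in (0)..Real.pi, 1 / (A - B * Real.cos x) ^ 2 =
      Real.pi * A / ((A ^ 2 - B ^ 2) * Real.sqrt (A ^ 2 - B ^ 2)) := by
  have hA : 0 < A := lt_of_le_of_lt hB hAB
  set s := Real.sqrt (A ^ 2 - B ^ 2) with hs_def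
  have hsq : 0 < A ^ 2 - B ^ 2 := by nlinarith
  have hs2 : s ^ 2 = A ^ 2 - B ^ 2 := Real.sq_sqrt hsq.le
  have hs : 0 < s := Real.sqrt_pos.2 hsq
  have hM : ∀ x : ℝ, 0 < A - B * Real.cos x := by
    intro x
    nlinarith [Real.cos_le_one x, mul_nonneg hB (sub_nonneg.2 (Real.cos_le_one x))]
  have hD : ∀ x : ℝ, 0 < A + s - B * Real.cos x := by
    intro x
    nlinarith [hM x]
  set F : ℝ → ℝ := fun x =>
    (A * (x + 2 * Real.arctan (B * Real.sin x / (A + s - B * Real.cos x))) / s +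
      B * Real.sin x / (A - B * Real.cos x)) / (A ^ 2 - B ^ 2) with hF_def
  have hderiv : ∀ x ∈ Set.uIcc (0:ℝ) Real.pi,
      HasDerivAt F (1 / (A - B * Real.cos x) ^ 2) x := by
    intro x _
    have ht : Real.sin x ^ 2 = 1 - Real.cos x ^ 2 := Real.sin_sq x
    have h1 : HasDerivAt (fun y => B * Real.sin y) (B * Real.cos x) x :=
      (Real.hasDerivAt_sin x).const_mul B
    have h2 : HasDerivAt (fun y => A + s - B * Real.cos y) (B * Real.sin x) x := by
      have := ((Real.hasDerivAt_cos x).const_mul B).const_sub (A + s)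
      simpa using this
    have h2' : HasDerivAt (fun y => A - B * Real.cos y) (B * Real.sin x) x := by
      have := ((Real.hasDerivAt_cos x).const_mul B).const_sub A
      simpa using this
    have hu : HasDerivAt (fun y => B * Real.sin y / (A + s - B * Real.cos y))
        ((B * Real.cos x * (A + s - B * Real.cos x) - B * Real.sin x * (B * Real.sin x)) /
          (A + s - B * Real.cos x) ^ 2) x := h1.div h2 (hD x).ne'
    have harc := hu.arctan
    have hG : HasDerivAt (fun y => y + 2 * Real.arctan (B * Real.sin y / (A + s - B * Real.cos y)))
        (s / (A - B * Real.cos x)) x := by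
      have h3 := (hasDerivAt_id x).add (harc.const_mul 2)
      refine h3.congr_deriv (Eq.symm ?_)
      have hDx := (hD x).ne'
      have hMx := (hM x).ne'
      have h1u : 0 < 1 + (B * Real.sin x / (A + s - B * Real.cos x)) ^ 2 := by positivity
      field_simp
      ring_nf
      linear_combination
        (B^2 * (s + (A - B * Real.cos x))) * ht + (s + (A - B * Real.cos x)) * hs2
    have hq : HasDerivAt (fun y => B * Real.sin y / (A - B * Real.cos y))
        ((B * Real.cos x * (A - B * Real.cos x) - B * Real.sin x * (B * Real.sin x)) /
          (A - B * Real.cos x) ^ 2) x := h1.div h2' (hM x).ne'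
    have htot := (((hG.const_mul A).div_const s).add hq).div_const (A ^ 2 - B ^ 2)
    refine htot.congr_deriv (Eq.symm ?_)
    have hMx := (hM x).ne'
    field_simp
    ring_nf
    linear_combination
      (B^2) * ht
  have hcont : Continuous fun x => 1 / (A - B * Real.cos x) ^ 2 := by
    apply Continuous.div continuous_const
    · exact ((continuous_const.sub (continuous_const.mul Real.continuous_cos)).pow 2)
    · intro x
      exact pow_ne_zero 2 (hM x).ne'
  rw [intervalIntegral.integral_eq_sub_of_hasDerivAt hderiv
    (hcont.intervalIntegrable 0 Real.pi)]
  simp only [hF_def, Real.sin_pi, Real.sin_zero, Real.cos_pi, Real.cos_zero, mul_zero,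
    zero_mul, zero_div, Real.arctan_zero, mul_one, add_zero, zero_add]
  field_simp
  ring

theorem stmt_10 (a v : ℝ) (n : ℕ) (ha : 0 < a) (hv : 0 ≤ v) (hn : 1 ≤ n) :
    ∫ x in (0)..Real.pi, 1 / (a / n + 2 * v * (1 - Real.cos x)) ^ 2 =
      Real.pi / (2 * (a / n) * Real.sqrt ((a / n) ^ 2 + 4 * a * v / n)) *
        (1 + (a / n) / (a / n + 4 * v)) := by
  have hn0 : (0:ℝ) < n := by exact_mod_cast hn
  have hb : 0 < a / n := div_pos ha hn0
  set b := a / (n:ℝ) with hb_def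
  have hkey := key_cos_integral (b + 2 * v) (2 * v) (by linarith) (by linarith)
  have heq : ∀ x : ℝ, a / n + 2 * v * (1 - Real.cos x)
      = (b + 2 * v) - (2 * v) * Real.cos x := by intro x; rw [hb_def]; ring
  have hint : (∫ x in (0)..Real.pi, 1 / (a / n + 2 * v * (1 - Real.cos x)) ^ 2)
      = ∫ x in (0)..Real.pi, 1 / ((b + 2 * v) - (2 * v) * Real.cos x) ^ 2 := by
    simp_rw [heq]
  rw [hint, hkey]
  have harg : (b + 2 * v) ^ 2 - (2 * v) ^ 2 = b ^ 2 + 4 * a * v / n := by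
    rw [hb_def]; ring
  have harg2 : (a / (n:ℝ)) ^ 2 + 4 * a * v / n = b ^ 2 + 4 * a * v / n := by
    rw [hb_def]
  rw [harg, harg2]
  set t := Real.sqrt (b ^ 2 + 4 * a * v / n) with ht_def
  have htpos : 0 < t := by
    apply Real.sqrt_pos.2
    have : b ^ 2 + 4 * a * v / n = b ^ 2 + 4 * b * v := by rw [hb_def]; ring
    rw [this]; nlinarith
  have ht2 : t ^ 2 = b ^ 2 + 4 * a * v / n := Real.sq_sqrt (by
    have : b ^ 2 + 4 * a * v / n = b ^ 2 + 4 * b * v := by rw [hb_def]; ring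
    rw [this]; nlinarith)
  have h4 : b ^ 2 + 4 * a * v / n = b ^ 2 + 4 * b * v := by rw [hb_def]; ring
  have hbv : 0 < b + 4 * v := by linarith
  rw [h4] at *
  field_simp
  ring
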